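/- Let K be a field of characteristic zero containing all roots of unity, and suppose zⁿ - f and xᵐ - φ are irreducible over K with n, m coprime. Let L = K[z]/(zⁿ - f) and L' = K[x]/(xᵐ - φ). Then L ⊗_K L' is a field, and it is a Galois extension of K with cyclic Galois group of order nm. -/

import Mathlib

set_option maxHeartbeats 1000000
set_option synthInstance.maxHeartbeats 400000

private lemma exists_mul_eq_aux (n m : ℕ) (hn : 0 < n) (hm : 0 < m) (h : Nat.Coprime n m) :
    ∃ s t : ℕ, m * s = n * t + 1 := by
  rcases eq_or_lt_of_le (Nat.succ_le_of_lt hn) with h1 | h1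
  · obtain rfl : n = 1 := h1.symm
    exact ⟨1, m - 1, by omega⟩
  · obtain ⟨s, -, hs⟩ := Nat.exists_mul_mod_eq_one_of_coprime h.symm h1
    refine ⟨s, m * s / n, ?_⟩
    have := Nat.div_add_mod (m * s) n
    omega

open Polynomial TensorProduct in
private theorem tensor_aux (K : Type) [Field K] [CharZero K]
    (hroot : ∀ k : ℕ, 0 < k → ∃ ζ : K, IsPrimitiveRoot ζ k)
    (n m : ℕ) (hn : 0 < n) (hm : 0 < m) (hnm : Nat.Coprime n m)
    (f φ : K) (L L' : Type) [Field L] [Field L'] [Algebra K L] [Algebra K L']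
    [FiniteDimensional K L] [FiniteDimensional K L']
    (α : L) (β : L') (hα : α ^ n = algebraMap K L f) (hβ : β ^ m = algebraMap K L' φ)
    (hLa : Algebra.adjoin K {α} = ⊤) (hL'b : Algebra.adjoin K {β} = ⊤)
    (hrankL : Module.finrank K L = n) (hrankL' : Module.finrank K L' = m) :
    ∃ hT : IsField (L ⊗[K] L'),
      letI := hT.toField
      IsGalois K (L ⊗[K] L') ∧
      IsCyclic ((L ⊗[K] L') ≃ₐ[K] (L ⊗[K] L')) ∧
      Nat.card ((L ⊗[K] L') ≃ₐ[K] (L ⊗[K] L')) = n * m := by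
  classical
  have hn0 : n ≠ 0 := hn.ne'
  have hm0 : m ≠ 0 := hm.ne'
  have hrankT : Module.finrank K (L ⊗[K] L') = n * m := by
    rw [Module.finrank_tensorProduct, hrankL, hrankL']
  haveI : Nontrivial (L ⊗[K] L') :=
    Module.nontrivial_of_finrank_pos (R := K) (by rw [hrankT]; exact Nat.mul_pos hn hm)
  -- the tensor product is a field
  have hT : IsField (L ⊗[K] L') := by
    obtain ⟨M, hM⟩ := Ideal.exists_maximal (L ⊗[K] L')
    haveI := hM
    set F := (L ⊗[K] L') ⧸ M with hF
    haveI : Nontrivial F := Ideal.Quotient.nontrivial_iff.mpr hM.ne_top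
    have hπs : Function.Surjective (Ideal.Quotient.mkₐ K M) := Ideal.Quotient.mk_surjective
    haveI : Module.Finite K F :=
      Module.Finite.of_surjective (Ideal.Quotient.mkₐ K M).toLinearMap hπs
    let gR : L' →ₐ[K] F := (Ideal.Quotient.mkₐ K M).comp Algebra.TensorProduct.includeRight
    letI : Algebra L' F := gR.toRingHom.toAlgebra
    haveI : IsScalarTower K L' F := IsScalarTower.of_algebraMap_eq'
      (show algebraMap K F = gR.toRingHom.comp (algebraMap K L') from (gR.comp_algebraMap).symm)
    have hdvd1 : n ∣ Module.finrank K F :=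
      ⟨Module.finrank L F, by rw [← hrankL, Module.finrank_mul_finrank]⟩
    have hdvd2 : m ∣ Module.finrank K F :=
      ⟨Module.finrank L' F, by rw [← hrankL', Module.finrank_mul_finrank]⟩
    have hdvd : n * m ∣ Module.finrank K F := hnm.mul_dvd_of_dvd_of_dvd hdvd1 hdvd2
    have hle : Module.finrank K F ≤ n * m := by
      rw [← hrankT]
      have h := LinearMap.finrank_range_le (Ideal.Quotient.mkₐ K M).toLinearMap
      have hsur' : Function.Surjective (Ideal.Quotient.mkₐ K M).toLinearMap := hπs
      rwa [LinearMap.range_eq_top.mpr hsur', finrank_top] at h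
    have hpos : 0 < Module.finrank K F := Module.finrank_pos_iff.mpr inferInstance
    have heq : Module.finrank K F = n * m := le_antisymm hle (Nat.le_of_dvd hpos hdvd)
    have hinj : Function.Injective (Ideal.Quotient.mkₐ K M).toLinearMap :=
      (LinearMap.injective_iff_surjective_of_finrank_eq_finrank (by rw [heq, hrankT])).mpr hπs
    exact (RingEquiv.ofBijective ((Ideal.Quotient.mkₐ K M) : (L ⊗[K] L') →+* F)
      ⟨hinj, hπs⟩).toMulEquiv.isField ((Ideal.Quotient.maximal_ideal_iff_isField_quotient M).mp hM)
  refine ⟨hT, ?_⟩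
  letI : Field (L ⊗[K] L') := hT.toField
  -- a subalgebra containing α ⊗ 1 and 1 ⊗ β is everything
  have hsup : ∀ A : Subalgebra K (L ⊗[K] L'),
      α ⊗ₜ[K] (1 : L') ∈ A → (1 : L) ⊗ₜ[K] β ∈ A → A = ⊤ := by
    intro A h1 h2
    rw [eq_top_iff, ← Algebra.TensorProduct.adjoin_tmul_eq_top, Algebra.adjoin_le_iff]
    rintro x ⟨a, b, rfl⟩
    have ha : a ⊗ₜ[K] (1 : L') ∈ A := by
      have hle : Algebra.adjoin K {α} ≤
          A.comap (Algebra.TensorProduct.includeLeft : L →ₐ[K] L ⊗[K] L') :=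
        Algebra.adjoin_le (Set.singleton_subset_iff.mpr h1)
      rw [hLa, top_le_iff] at hle
      have ha' : a ∈ A.comap (Algebra.TensorProduct.includeLeft : L →ₐ[K] L ⊗[K] L') :=
        hle.symm ▸ Algebra.mem_top
      simpa using ha'
    have hb : (1 : L) ⊗ₜ[K] b ∈ A := by
      have hle : Algebra.adjoin K {β} ≤
          A.comap (Algebra.TensorProduct.includeRight : L' →ₐ[K] L ⊗[K] L') :=
        Algebra.adjoin_le (Set.singleton_subset_iff.mpr h2)
      rw [hL'b, top_le_iff] at hle
      have hb' : b ∈ A.comap (Algebra.TensorProduct.includeRight : L' →ₐ[K] L ⊗[K] L') :=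
        hle.symm ▸ Algebra.mem_top
      simpa using hb'
    have hab : a ⊗ₜ[K] b = (a ⊗ₜ[K] (1 : L')) * ((1 : L) ⊗ₜ[K] b) := by
      rw [Algebra.TensorProduct.tmul_mul_tmul, mul_one, one_mul]
    rw [SetLike.mem_coe, hab]
    exact mul_mem ha hb
  -- a radical generator
  have exgen : ∃ (c : K) (γ : L ⊗[K] L'),
      γ ^ (n * m) = algebraMap K (L ⊗[K] L') c ∧ Algebra.adjoin K {γ} = ⊤ := by
    rcases eq_or_ne f 0 with hf0 | hf0
    · have hα0 : α = 0 := by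
        have h := hα
        rw [hf0, map_zero] at h
        exact (pow_eq_zero_iff hn0).mp h
      refine ⟨φ ^ n, (1 : L) ⊗ₜ β, ?_, ?_⟩
      · have hb2 : β ^ (n * m) = algebraMap K L' (φ ^ n) := by
          rw [show n * m = m * n from mul_comm n m, pow_mul, hβ, ← map_pow]
        calc ((1 : L) ⊗ₜ[K] β) ^ (n * m) = ((1 : L) ^ (n * m)) ⊗ₜ[K] (β ^ (n * m)) :=
              Algebra.TensorProduct.tmul_pow _ _ _
          _ = (1 : L) ⊗ₜ[K] (algebraMap K L' (φ ^ n)) := by rw [hb2, one_pow]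
          _ = algebraMap K (L ⊗[K] L') (φ ^ n) := (Algebra.TensorProduct.algebraMap_apply' _).symm
      · refine hsup _ ?_ (Algebra.self_mem_adjoin_singleton K _)
        rw [hα0, TensorProduct.zero_tmul]
        exact zero_mem _
    rcases eq_or_ne φ 0 with hφ0 | hφ0
    · have hβ0 : β = 0 := by
        have h := hβ
        rw [hφ0, map_zero] at h
        exact (pow_eq_zero_iff hm0).mp h
      refine ⟨f ^ m, α ⊗ₜ (1 : L'), ?_, ?_⟩
      · have ha2 : α ^ (n * m) = algebraMap K L (f ^ m) := by
          rw [pow_mul, hα, ← map_pow]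
        calc (α ⊗ₜ[K] (1 : L')) ^ (n * m) = (α ^ (n * m)) ⊗ₜ[K] ((1 : L') ^ (n * m)) :=
              Algebra.TensorProduct.tmul_pow _ _ _
          _ = (algebraMap K L (f ^ m)) ⊗ₜ[K] (1 : L') := by rw [ha2, one_pow]
          _ = algebraMap K (L ⊗[K] L') (f ^ m) := (Algebra.TensorProduct.algebraMap_apply _).symm
      · refine hsup _ (Algebra.self_mem_adjoin_singleton K _) ?_
        rw [hβ0, TensorProduct.tmul_zero]
        exact zero_mem _
    · obtain ⟨s, t, hst⟩ := exists_mul_eq_aux n m hn hm hnm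
      obtain ⟨s', t', hst'⟩ := exists_mul_eq_aux m n hm hn hnm.symm
      refine ⟨f ^ m * φ ^ n, α ⊗ₜ β, ?_, ?_⟩
      · have ha2 : α ^ (n * m) = algebraMap K L (f ^ m) := by
          rw [pow_mul, hα, ← map_pow]
        have hb2 : β ^ (n * m) = algebraMap K L' (φ ^ n) := by
          rw [show n * m = m * n from mul_comm n m, pow_mul, hβ, ← map_pow]
        calc (α ⊗ₜ[K] β) ^ (n * m) = (α ^ (n * m)) ⊗ₜ[K] (β ^ (n * m)) :=
              Algebra.TensorProduct.tmul_pow _ _ _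
          _ = (algebraMap K L (f ^ m)) ⊗ₜ[K] (algebraMap K L' (φ ^ n)) := by
              rw [ha2, hb2]
          _ = algebraMap K (L ⊗[K] L') (f ^ m * φ ^ n) := by
              rw [map_mul, Algebra.TensorProduct.algebraMap_apply,
                Algebra.TensorProduct.algebraMap_apply', Algebra.TensorProduct.tmul_mul_tmul,
                mul_one, one_mul]
      · refine hsup _ ?_ ?_
        · have eα : α ^ (m * s) = (f ^ t) • α := by
            rw [hst, pow_succ, pow_mul, hα, ← map_pow, ← Algebra.smul_def]
          have eβ : β ^ (m * s) = (φ ^ s) • (1 : L') := by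
            rw [pow_mul, hβ, ← map_pow, Algebra.algebraMap_eq_smul_one]
          have e1 : (α ⊗ₜ[K] β) ^ (m * s) = (f ^ t * φ ^ s) • (α ⊗ₜ[K] (1 : L')) := by
            rw [Algebra.TensorProduct.tmul_pow, eα, eβ, TensorProduct.tmul_smul,
              TensorProduct.smul_tmul', TensorProduct.smul_tmul', smul_smul,
              mul_comm (φ ^ s) (f ^ t)]
          have hne : (f ^ t * φ ^ s) ≠ 0 := mul_ne_zero (pow_ne_zero _ hf0) (pow_ne_zero _ hφ0)
          have h2 : α ⊗ₜ[K] (1 : L') = (f ^ t * φ ^ s)⁻¹ • (α ⊗ₜ[K] β) ^ (m * s) := by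
            rw [e1, inv_smul_smul₀ hne]
          rw [h2]
          exact Subalgebra.smul_mem _ (Subalgebra.pow_mem _ (Algebra.self_mem_adjoin_singleton K _) _) _
        · have eβ : β ^ (n * s') = (φ ^ t') • β := by
            rw [hst', pow_succ, pow_mul, hβ, ← map_pow, ← Algebra.smul_def]
          have eα : α ^ (n * s') = (f ^ s') • (1 : L) := by
            rw [pow_mul, hα, ← map_pow, Algebra.algebraMap_eq_smul_one]
          have e1 : (α ⊗ₜ[K] β) ^ (n * s') = (f ^ s' * φ ^ t') • ((1 : L) ⊗ₜ[K] β) := by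
            rw [Algebra.TensorProduct.tmul_pow, eα, eβ, TensorProduct.tmul_smul,
              TensorProduct.smul_tmul', TensorProduct.smul_tmul', smul_smul,
              mul_comm (φ ^ t') (f ^ s')]
          have hne : (f ^ s' * φ ^ t') ≠ 0 := mul_ne_zero (pow_ne_zero _ hf0) (pow_ne_zero _ hφ0)
          have h2 : (1 : L) ⊗ₜ[K] β = (f ^ s' * φ ^ t')⁻¹ • (α ⊗ₜ[K] β) ^ (n * s') := by
            rw [e1, inv_smul_smul₀ hne]
          rw [h2]
          exact Subalgebra.smul_mem _ (Subalgebra.pow_mem _ (Algebra.self_mem_adjoin_singleton K _) _) _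
  obtain ⟨c, γ, hγpow, hγadj⟩ := exgen
  have hint : IsIntegral K γ := IsIntegral.of_finite K γ
  have hKγ : IntermediateField.adjoin K {γ} = ⊤ := by
    apply IntermediateField.toSubalgebra_injective
    rw [IntermediateField.adjoin_simple_toSubalgebra_of_isAlgebraic hint.isAlgebraic, hγadj,
      IntermediateField.top_toSubalgebra]
  have hdeg : (minpoly K γ).natDegree = n * m := by
    rw [← IntermediateField.adjoin.finrank hint, hKγ, IntermediateField.finrank_top', hrankT]
  have hmono : (X ^ (n * m) - C c : K[X]).Monic :=
    monic_X_pow_sub_C c (Nat.mul_ne_zero hn0 hm0)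
  have haev : (Polynomial.aeval γ) (X ^ (n * m) - C c) = 0 := by
    rw [map_sub, map_pow, aeval_X, aeval_C, hγpow, sub_self]
  have hdvd := minpoly.dvd K γ haev
  have hq_eq : X ^ (n * m) - C c = minpoly K γ := by
    obtain ⟨u, hu⟩ := hdvd
    have hmin0 : minpoly K γ ≠ 0 := minpoly.ne_zero hint
    have hqne : (X ^ (n * m) - C c : K[X]) ≠ 0 := hmono.ne_zero
    have hu0 : u ≠ 0 := by rintro rfl; rw [mul_zero] at hu; exact hqne hu
    have hd : (X ^ (n * m) - C c : K[X]).natDegree = (minpoly K γ).natDegree + u.natDegree := by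
      rw [hu, natDegree_mul hmin0 hu0]
    rw [natDegree_X_pow_sub_C, hdeg] at hd
    have hu_deg : u.degree = 0 := by
      rw [degree_eq_natDegree hu0]
      exact_mod_cast by omega
    have huu : IsUnit u := isUnit_iff_degree_eq_zero.mpr hu_deg
    exact (Polynomial.eq_of_monic_of_associated (minpoly.monic hint) hmono
      ⟨huu.unit, by rw [IsUnit.unit_spec]; exact hu.symm⟩).symm
  have hirr : Irreducible (X ^ (n * m) - C c : K[X]) := hq_eq ▸ minpoly.irreducible hint
  obtain ⟨ζ, hζ⟩ := hroot (n * m) (Nat.mul_pos hn hm)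
  haveI : NeZero (n * m) := ⟨Nat.mul_ne_zero hn0 hm0⟩
  have hζT : IsPrimitiveRoot (algebraMap K (L ⊗[K] L') ζ) (n * m) :=
    hζ.map_of_injective (algebraMap K _).injective
  haveI hsp : IsSplittingField K (L ⊗[K] L') (X ^ (n * m) - C c) := by
    constructor
    · rw [Polynomial.map_sub, Polynomial.map_pow, Polynomial.map_C,
        Polynomial.map_X]
      exact X_pow_sub_C_splits_of_isPrimitiveRoot hζT hγpow
    · rw [eq_top_iff, ← hγadj]
      apply Algebra.adjoin_mono
      rw [Set.singleton_subset_iff, mem_rootSet_of_ne hmono.ne_zero]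
      exact haev
  have hζne : (primitiveRoots (n * m) K).Nonempty :=
    ⟨ζ, (mem_primitiveRoots (Nat.mul_pos hn hm)).mpr hζ⟩
  haveI hGal := isGalois_of_isSplittingField_X_pow_sub_C hζne hirr (L ⊗[K] L')
  refine ⟨hGal, isCyclic_of_isSplittingField_X_pow_sub_C hζne hirr (L ⊗[K] L'), ?_⟩
  rw [IsGalois.card_aut_eq_finrank, hrankT]

open Polynomial TensorProduct in
theorem stmt_5 (K : Type) [Field K] [CharZero K]
    (hroot : ∀ k : ℕ, 0 < k → ∃ ζ : K, IsPrimitiveRoot ζ k)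
    (n m : ℕ) (hn : 0 < n) (hm : 0 < m) (hnm : Nat.Coprime n m)
    (f φ : K) (hf : Irreducible (X ^ n - C f)) (hφ : Irreducible (X ^ m - C φ)) :
    ∃ hT : IsField (AdjoinRoot (X ^ n - C f) ⊗[K] AdjoinRoot (X ^ m - C φ)),
      letI := hT.toField
      IsGalois K (AdjoinRoot (X ^ n - C f) ⊗[K] AdjoinRoot (X ^ m - C φ)) ∧
      IsCyclic ((AdjoinRoot (X ^ n - C f) ⊗[K] AdjoinRoot (X ^ m - C φ)) ≃ₐ[K]
        (AdjoinRoot (X ^ n - C f) ⊗[K] AdjoinRoot (X ^ m - C φ))) ∧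
      Nat.card ((AdjoinRoot (X ^ n - C f) ⊗[K] AdjoinRoot (X ^ m - C φ)) ≃ₐ[K]
        (AdjoinRoot (X ^ n - C f) ⊗[K] AdjoinRoot (X ^ m - C φ))) = n * m := by
  haveI := Fact.mk hf
  haveI := Fact.mk hφ
  haveI : FiniteDimensional K (AdjoinRoot (X ^ n - C f)) :=
    (AdjoinRoot.powerBasis hf.ne_zero).finite
  haveI : FiniteDimensional K (AdjoinRoot (X ^ m - C φ)) :=
    (AdjoinRoot.powerBasis hφ.ne_zero).finite
  exact tensor_aux K hroot n m hn hm hnm f φ _ _ (AdjoinRoot.root _) (AdjoinRoot.root _)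
    (by rw [AdjoinRoot.algebraMap_eq]; exact root_X_pow_sub_C_pow n f)
    (by rw [AdjoinRoot.algebraMap_eq]; exact root_X_pow_sub_C_pow m φ)
    (AdjoinRoot.adjoinRoot_eq_top) (AdjoinRoot.adjoinRoot_eq_top)
    (by rw [(AdjoinRoot.powerBasis hf.ne_zero).finrank, AdjoinRoot.powerBasis_dim,
      natDegree_X_pow_sub_C])
    (by rw [(AdjoinRoot.powerBasis hφ.ne_zero).finrank, AdjoinRoot.powerBasis_dim,
      natDegree_X_pow_sub_C])
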